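/- Fix J ∈ 𝕊 and let D ⊆ L_J be a domain of L_J, symmetric with respect to the real axis (x+yJ ∈ D implies x−yJ ∈ D) and with D ∩ ℝ ≠ ∅. Let Ω_D be the symmetric completion of D. If f : D → L_J is holomorphic, then the function f̃ : Ω_D → ℍ defined by f̃(x+yI) = (1/2)·(f(x+yJ) + f(x−yJ)) + I·(1/2)·(J·(f(x−yJ) − f(x+yJ))) is the unique slice regular extension of f to Ω_D. -/

import Mathlib

open Quaternion Asymptotics Set

noncomputable section

/-- The 2-sphere of imaginary units in the quaternions. -/
def SpH : Set ℍ[ℝ] := {q | q.re = 0 ∧ ‖q‖ = 1}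

/-- The slice (complex plane) `L_I = {x + y I : x, y ∈ ℝ}`. -/
def sliceL (I : ℍ[ℝ]) : Set ℍ[ℝ] := {q | ∃ x y : ℝ, q = (x : ℍ[ℝ]) + y • I}

/-- `f` has continuous partial derivatives on the `I`-slice part of `Ω` and satisfies the
Cauchy–Riemann equation `∂f/∂x + I ∂f/∂y = 0` there. -/
def SliceHolomorphicOn (I : ℍ[ℝ]) (f : ℍ[ℝ] → ℍ[ℝ]) (Ω : Set ℍ[ℝ]) : Prop :=
  ∃ fx fy : ℝ → ℝ → ℍ[ℝ],
    (∀ x y : ℝ, (x : ℍ[ℝ]) + y • I ∈ Ω →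
      HasDerivAt (fun t : ℝ => f ((t : ℍ[ℝ]) + y • I)) (fx x y) x) ∧
    (∀ x y : ℝ, (x : ℍ[ℝ]) + y • I ∈ Ω →
      HasDerivAt (fun t : ℝ => f ((x : ℍ[ℝ]) + t • I)) (fy x y) y) ∧
    ContinuousOn (fun p : ℝ × ℝ => fx p.1 p.2) {p : ℝ × ℝ | (p.1 : ℍ[ℝ]) + p.2 • I ∈ Ω} ∧
    ContinuousOn (fun p : ℝ × ℝ => fy p.1 p.2) {p : ℝ × ℝ | (p.1 : ℍ[ℝ]) + p.2 • I ∈ Ω} ∧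
    ∀ x y : ℝ, (x : ℍ[ℝ]) + y • I ∈ Ω → fx x y + I * fy x y = 0

/-- `f` is slice regular on `Ω`. -/
def SliceRegularOn (f : ℍ[ℝ] → ℍ[ℝ]) (Ω : Set ℍ[ℝ]) : Prop :=
  ∀ I ∈ SpH, SliceHolomorphicOn I f Ω

/-- `Ω` is axially symmetric. -/
def AxSymm (Ω : Set ℍ[ℝ]) : Prop :=
  ∀ (x y : ℝ), ∀ I ∈ SpH, (x : ℍ[ℝ]) + y • I ∈ Ω → ∀ J ∈ SpH, (x : ℍ[ℝ]) + y • J ∈ Ω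

/-- `Ω` is an s-domain: a domain meeting the real axis whose slices are connected. -/
def IsSDomain (Ω : Set ℍ[ℝ]) : Prop :=
  IsOpen Ω ∧ IsConnected Ω ∧ (∃ x : ℝ, (x : ℍ[ℝ]) ∈ Ω) ∧
    ∀ I ∈ SpH, IsConnected (Ω ∩ sliceL I)

/-- The axially symmetric completion of a set `S ⊆ ℍ`. -/
def symmComp (S : Set ℍ[ℝ]) : Set ℍ[ℝ] :=
  {q | ∃ (x y : ℝ) (I : ℍ[ℝ]), I ∈ SpH ∧ q = (x : ℍ[ℝ]) + y • I ∧
    ∃ J ∈ SpH, (x : ℍ[ℝ]) + y • J ∈ S}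

/-- A domain of the slice `L_I`: a nonempty connected relatively open subset of `L_I`. -/
def IsSliceDomain (I : ℍ[ℝ]) (D : Set ℍ[ℝ]) : Prop :=
  D ⊆ sliceL I ∧ IsConnected D ∧ IsOpen {p : ℝ × ℝ | (p.1 : ℍ[ℝ]) + p.2 • I ∈ D}

/-! ### Auxiliary lemmas -/

lemma SpH.mul_self' {I : ℍ[ℝ]} (hI : I ∈ SpH) : I * I = -1 := by
  have hs : star I = -I := Quaternion.star_eq_neg.2 hI.1
  have h1 : I * star I = ((‖I‖ * ‖I‖ : ℝ) : ℍ[ℝ]) := by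
    rw [Quaternion.self_mul_star, Quaternion.normSq_eq_norm_mul_self]
  rw [hs, mul_neg] at h1
  have := congrArg Neg.neg h1
  simp [hI.2] at this
  simpa using this

lemma param_re {I : ℍ[ℝ]} (hI : I ∈ SpH) (x y : ℝ) : ((x : ℍ[ℝ]) + y • I).re = x := by
  simp [Quaternion.re_coe, hI.1]

lemma param_eq {I I' : ℍ[ℝ]} (hI : I ∈ SpH) (hI' : I' ∈ SpH) {x y x' y' : ℝ}
    (h : (x : ℍ[ℝ]) + y • I = (x' : ℍ[ℝ]) + y' • I') : x = x' ∧ y • I = y' • I' := by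
  have hx : x = x' := by
    have := congrArg QuaternionAlgebra.re h
    rwa [param_re hI, param_re hI'] at this
  subst hx
  exact ⟨rfl, by exact add_left_cancel h⟩

lemma param_abs {I I' : ℍ[ℝ]} (hI : I ∈ SpH) (hI' : I' ∈ SpH) {y y' : ℝ}
    (h : y • I = y' • I') : |y| = |y'| := by
  have := congrArg norm h
  simpa [norm_smul, hI.2, hI'.2] using this

lemma mem_slice_cases {J : ℍ[ℝ]} (hJ : J ∈ SpH) {D : Set ℍ[ℝ]} (hDs : D ⊆ sliceL J)
    {I : ℍ[ℝ]} (hI : I ∈ SpH) {x y : ℝ} (h : (x : ℍ[ℝ]) + y • I ∈ D) :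
    (x : ℍ[ℝ]) + y • J ∈ D ∨ (x : ℍ[ℝ]) + (-y) • J ∈ D := by
  obtain ⟨a, b, hab⟩ := hDs h
  obtain ⟨hx, hs⟩ := param_eq hI hJ hab
  subst hx
  have habs : |y| = |b| := param_abs hI hJ hs
  rcases abs_eq_abs.1 habs with hb | hb
  · left; rwa [hab, ← hb] at h
  · right; rwa [hab, ← neg_eq_iff_eq_neg.2 hb] at h

lemma mem_symmComp_iff {J : ℍ[ℝ]} (hJ : J ∈ SpH) {D : Set ℍ[ℝ]} (hDs : D ⊆ sliceL J)
    (hsymm : ∀ x y : ℝ, (x : ℍ[ℝ]) + y • J ∈ D → (x : ℍ[ℝ]) - y • J ∈ D)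
    {I : ℍ[ℝ]} (hI : I ∈ SpH) {x y : ℝ} :
    (x : ℍ[ℝ]) + y • I ∈ symmComp D ↔ (x : ℍ[ℝ]) + y • J ∈ D := by
  have hsymm' : ∀ x y : ℝ, (x : ℍ[ℝ]) + y • J ∈ D → (x : ℍ[ℝ]) + (-y) • J ∈ D := by
    intro a b hb
    have := hsymm a b hb
    rwa [sub_eq_add_neg, ← neg_smul] at this
  constructor
  · rintro ⟨x', y', I', hI', heq, J', hJ', hmem⟩
    obtain ⟨hx, hs⟩ := param_eq hI hI' heq
    subst hx
    have hmem' : (x : ℍ[ℝ]) + y' • J ∈ D := by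
      rcases mem_slice_cases hJ hDs hJ' hmem with h | h
      · exact h
      · simpa using hsymm' x (-y') h
    have habs : |y| = |y'| := param_abs hI hI' hs
    rcases abs_eq_abs.1 habs with hb | hb
    · rwa [hb]
    · rw [hb]; exact hsymm' x y' hmem'
  · intro h
    exact ⟨x, y, I, hI, rfl, J, hJ, h⟩

lemma hasFDerivAt_of_partials {F : Type*} [NormedAddCommGroup F] [NormedSpace ℝ F]
    (f fx fy : ℝ → ℝ → F) (E : Set (ℝ × ℝ)) (hE : IsOpen E)
    (hfx : ∀ p : ℝ × ℝ, p ∈ E → HasDerivAt (fun t => f t p.2) (fx p.1 p.2) p.1)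
    (hfy : ∀ p : ℝ × ℝ, p ∈ E → HasDerivAt (fun t => f p.1 t) (fy p.1 p.2) p.2)
    (hcx : ContinuousOn (fun p : ℝ × ℝ => fx p.1 p.2) E)
    (a : ℝ × ℝ) (ha : a ∈ E) :
    HasFDerivAt (fun p : ℝ × ℝ => f p.1 p.2)
      ((ContinuousLinearMap.fst ℝ ℝ ℝ).smulRight (fx a.1 a.2) +
       (ContinuousLinearMap.snd ℝ ℝ ℝ).smulRight (fy a.1 a.2)) a := by
  rw [hasFDerivAt_iff_isLittleO_nhds_zero]
  have h2 : (fun h : ℝ × ℝ => f a.1 (a.2 + h.2) - f a.1 a.2 - h.2 • fy a.1 a.2)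
      =o[nhds 0] (fun h : ℝ × ℝ => h) := by
    have := (hasDerivAt_iff_isLittleO.1 (hfy a ha))
    have htd : Filter.Tendsto (fun h : ℝ × ℝ => a.2 + h.2) (nhds 0) (nhds a.2) := by
      simpa using ((continuous_snd.tendsto (0:ℝ×ℝ)).const_add a.2)
    have hcomp := this.comp_tendsto htd
    have : (fun h : ℝ × ℝ => f a.1 (a.2 + h.2) - f a.1 a.2 - (a.2 + h.2 - a.2) • fy a.1 a.2)
        =o[nhds 0] (fun h : ℝ × ℝ => a.2 + h.2 - a.2) := hcomp
    simp only [add_sub_cancel_left] at this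
    exact this.trans_isBigO (isBigO_of_le _ (fun h => by
      simpa using (norm_snd_le h)))
  have h1 : (fun h : ℝ × ℝ => f (a.1 + h.1) (a.2 + h.2) - f a.1 (a.2 + h.2) - h.1 • fx a.1 a.2)
      =o[nhds 0] (fun h : ℝ × ℝ => h) := by
    rw [isLittleO_iff]
    intro c hc
    have hca : ContinuousAt (fun p : ℝ × ℝ => fx p.1 p.2) a :=
      hcx.continuousAt (hE.mem_nhds ha)
    have hev : ∀ᶠ p : ℝ × ℝ in nhds a, ‖fx p.1 p.2 - fx a.1 a.2‖ ≤ c := by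
      have := hca.eventually (Metric.closedBall_mem_nhds (fx a.1 a.2) hc)
      filter_upwards [this] with p hp
      simpa [dist_eq_norm] using hp
    obtain ⟨δ, hδpos, hδ⟩ := Metric.eventually_nhds_iff.1 (hev.and (hE.eventually_mem ha))
    rw [Metric.eventually_nhds_iff]
    refine ⟨δ, hδpos, fun h hh => ?_⟩
    set s : Set ℝ := Metric.ball a.1 δ with hs
    have hmem : ∀ t ∈ s, (t, a.2 + h.2) ∈ E ∧ ‖fx t (a.2 + h.2) - fx a.1 a.2‖ ≤ c := by
      intro t ht
      have : dist (t, a.2 + h.2) a < δ := by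
        rw [Prod.dist_eq]
        refine max_lt ht ?_
        calc dist (a.2 + h.2) a.2 = ‖h.2‖ := by simp [dist_eq_norm]
        _ ≤ ‖h‖ := norm_snd_le h
        _ < δ := by simpa [dist_eq_norm] using hh
      exact ⟨(hδ this).2, (hδ this).1⟩
    have hderiv : ∀ t ∈ s, HasDerivWithinAt
        (fun t => f t (a.2 + h.2) - t • fx a.1 a.2) (fx t (a.2 + h.2) - fx a.1 a.2) s t := by
      intro t ht
      exact ((hfx (t, a.2 + h.2) (hmem t ht).1).sub
        (by simpa using (hasDerivAt_id t).smul_const (fx a.1 a.2))).hasDerivWithinAt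
    have hbound : ∀ t ∈ s, ‖fx t (a.2 + h.2) - fx a.1 a.2‖ ≤ c := fun t ht => (hmem t ht).2
    have ha1 : a.1 ∈ s := Metric.mem_ball_self hδpos
    have hx1 : a.1 + h.1 ∈ s := by
      rw [hs, Metric.mem_ball]
      calc dist (a.1 + h.1) a.1 = ‖h.1‖ := by simp [dist_eq_norm]
      _ ≤ ‖h‖ := norm_fst_le h
      _ < δ := by simpa [dist_eq_norm] using hh
    have := (convex_ball a.1 δ).norm_image_sub_le_of_norm_hasDerivWithin_le
      hderiv hbound ha1 hx1
    have heq : (fun t => f t (a.2 + h.2) - t • fx a.1 a.2) (a.1 + h.1) -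
        (fun t => f t (a.2 + h.2) - t • fx a.1 a.2) a.1
        = f (a.1 + h.1) (a.2 + h.2) - f a.1 (a.2 + h.2) - h.1 • fx a.1 a.2 := by
      simp only
      rw [add_smul]
      abel
    rw [heq] at this
    calc ‖f (a.1 + h.1) (a.2 + h.2) - f a.1 (a.2 + h.2) - h.1 • fx a.1 a.2‖
        ≤ c * ‖a.1 + h.1 - a.1‖ := this
      _ = c * ‖h.1‖ := by simp
      _ ≤ c * ‖h‖ := mul_le_mul_of_nonneg_left (norm_fst_le h) (le_of_lt hc)
  have := h1.add h2
  refine this.congr' (Filter.Eventually.of_forall fun h => ?_)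
    (Filter.Eventually.of_forall fun h => rfl)
  simp only [ContinuousLinearMap.add_apply, ContinuousLinearMap.smulRight_apply,
    ContinuousLinearMap.coe_fst', ContinuousLinearMap.coe_snd', Prod.fst_add, Prod.snd_add]
  abel

open Classical in
def ftfun (f : ℍ[ℝ] → ℍ[ℝ]) (J : ℍ[ℝ]) : ℍ[ℝ] → ℍ[ℝ] := fun q =>
  let x : ℝ := q.re
  let w : ℍ[ℝ] := q - (x : ℍ[ℝ])
  let I : ℍ[ℝ] := if w = 0 then J else ‖w‖⁻¹ • w
  (1 / 2 : ℝ) • (f ((x : ℍ[ℝ]) + ‖w‖ • J) + f ((x : ℍ[ℝ]) - ‖w‖ • J)) +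
    I * ((1 / 2 : ℝ) • (J * (f ((x : ℍ[ℝ]) - ‖w‖ • J) - f ((x : ℍ[ℝ]) + ‖w‖ • J))))

def Ffun (f : ℍ[ℝ] → ℍ[ℝ]) (J I : ℍ[ℝ]) (x y : ℝ) : ℍ[ℝ] :=
  (1 / 2 : ℝ) • (f ((x : ℍ[ℝ]) + y • J) + f ((x : ℍ[ℝ]) - y • J)) +
    I * ((1 / 2 : ℝ) • (J * (f ((x : ℍ[ℝ]) - y • J) - f ((x : ℍ[ℝ]) + y • J))))

lemma ft_eval (f : ℍ[ℝ] → ℍ[ℝ]) {J I : ℍ[ℝ]} (hJ : J ∈ SpH) (hI : I ∈ SpH) (x y : ℝ) :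
    ftfun f J ((x : ℍ[ℝ]) + y • I) = Ffun f J I x y := by
  have hre : ((x : ℍ[ℝ]) + y • I).re = x := param_re hI x y
  have hw : ((x : ℍ[ℝ]) + y • I) - ((((x : ℍ[ℝ]) + y • I).re : ℝ) : ℍ[ℝ]) = y • I := by
    rw [hre]; exact add_sub_cancel_left _ _
  rw [ftfun, Ffun]
  simp only [hre, add_sub_cancel_left]
  rcases eq_or_ne y 0 with hy | hy
  · subst hy
    simp only [zero_smul, norm_zero, if_pos rfl, add_zero, sub_zero, sub_self, mul_zero,
      smul_zero, zero_mul]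
  · have hwne : y • I ≠ 0 := by
      intro h
      have := congrArg norm h
      simp [norm_smul, hI.2] at this
      exact hy this
    have hnorm : ‖y • I‖ = |y| := by simp [norm_smul, hI.2]
    rw [if_neg (show ¬((x : ℍ[ℝ]) + y • I - ((((x : ℍ[ℝ]) + y • I).re : ℝ) : ℍ[ℝ]) = 0) from
      by rw [hw]; exact hwne), hnorm]
    rcases lt_or_gt_of_ne hy with hneg | hpos
    · have habs : |y| = -y := abs_of_neg hneg
      have hIdir : (-y)⁻¹ • (y • I) = -I := by
        rw [smul_smul]
        have : (-y)⁻¹ * y = -1 := by field_simp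
        rw [this, neg_one_smul]
      rw [habs, hIdir]
      have e1 : (x : ℍ[ℝ]) + (-y) • J = (x : ℍ[ℝ]) - y • J := by
        rw [neg_smul, ← sub_eq_add_neg]
      have e2 : (x : ℍ[ℝ]) - (-y) • J = (x : ℍ[ℝ]) + y • J := by
        rw [neg_smul, sub_neg_eq_add]
      rw [e1, e2]
      have e3 : f ((x : ℍ[ℝ]) + y • J) - f ((x : ℍ[ℝ]) - y • J) =
          -(f ((x : ℍ[ℝ]) - y • J) - f ((x : ℍ[ℝ]) + y • J)) := (neg_sub _ _).symm
      rw [e3]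
      simp only [mul_neg, smul_neg, neg_mul, neg_neg]
      rw [add_comm (f ((x : ℍ[ℝ]) - y • J))]
    · have habs : |y| = y := abs_of_pos hpos
      have hIdir : y⁻¹ • (y • I) = I := by
        rw [smul_smul, inv_mul_cancel₀ hy, one_smul]
      rw [habs, hIdir]

lemma cr_algebra {I J a b c d : ℍ[ℝ]} (hI2 : I * I = -1) (hJ2 : J * J = -1)
    (h1 : a + J * b = 0) (h2 : c + J * d = 0) :
    ((1 / 2 : ℝ) • (a + c) + I * ((1 / 2 : ℝ) • (J * (c - a)))) +
      I * ((1 / 2 : ℝ) • (b - d) + I * ((1 / 2 : ℝ) • (J * (-d - b)))) = 0 := by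
  have ha : a = -(J * b) := eq_neg_of_add_eq_zero_left h1
  have hc : c = -(J * d) := eq_neg_of_add_eq_zero_left h2
  subst ha hc
  simp only [mul_add, mul_sub, mul_neg, mul_smul_comm, smul_add, smul_sub, smul_neg,
    sub_neg_eq_add, neg_neg, ← mul_assoc, hI2, hJ2, neg_one_mul, one_mul, neg_mul]
  abel

def Fxfun (fX : ℝ → ℝ → ℍ[ℝ]) (J I : ℍ[ℝ]) (x y : ℝ) : ℍ[ℝ] :=
  (1 / 2 : ℝ) • (fX x y + fX x (-y)) +
    I * ((1 / 2 : ℝ) • (J * (fX x (-y) - fX x y)))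

def Fyfun (fY : ℝ → ℝ → ℍ[ℝ]) (J I : ℍ[ℝ]) (x y : ℝ) : ℍ[ℝ] :=
  (1 / 2 : ℝ) • (fY x y + -fY x (-y)) +
    I * ((1 / 2 : ℝ) • (J * (-fY x (-y) - fY x y)))

lemma Ffun_hasDerivAt_x (f : ℍ[ℝ] → ℍ[ℝ]) {J : ℍ[ℝ]} (fX : ℝ → ℝ → ℍ[ℝ]) {D : Set ℍ[ℝ]}
    (hfX : ∀ x y : ℝ, (x : ℍ[ℝ]) + y • J ∈ D →
      HasDerivAt (fun t : ℝ => f ((t : ℍ[ℝ]) + y • J)) (fX x y) x)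
    (I : ℍ[ℝ]) {x y : ℝ} (hxy : (x : ℍ[ℝ]) + y • J ∈ D)
    (hxy' : (x : ℍ[ℝ]) + (-y) • J ∈ D) :
    HasDerivAt (fun t : ℝ => Ffun f J I t y) (Fxfun fX J I x y) x := by
  have h1 := hfX x y hxy
  have h2 : HasDerivAt (fun t : ℝ => f ((t : ℍ[ℝ]) - y • J)) (fX x (-y)) x := by
    have := hfX x (-y) hxy'
    simpa only [neg_smul, ← sub_eq_add_neg] using this
  have hA := (h1.add h2).const_smul (1 / 2 : ℝ)
  have hB := (((h2.sub h1).const_mul J).const_smul (1 / 2 : ℝ)).const_mul I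
  simpa only [Ffun, Fxfun, Pi.add_def, Pi.smul_def, Pi.sub_def] using hA.add hB

lemma Ffun_hasDerivAt_y (f : ℍ[ℝ] → ℍ[ℝ]) {J : ℍ[ℝ]} (fY : ℝ → ℝ → ℍ[ℝ]) {D : Set ℍ[ℝ]}
    (hfY : ∀ x y : ℝ, (x : ℍ[ℝ]) + y • J ∈ D →
      HasDerivAt (fun t : ℝ => f ((x : ℍ[ℝ]) + t • J)) (fY x y) y)
    (I : ℍ[ℝ]) {x y : ℝ} (hxy : (x : ℍ[ℝ]) + y • J ∈ D)
    (hxy' : (x : ℍ[ℝ]) + (-y) • J ∈ D) :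
    HasDerivAt (fun t : ℝ => Ffun f J I x t) (Fyfun fY J I x y) y := by
  have h1 := hfY x y hxy
  have h2 : HasDerivAt (fun t : ℝ => f ((x : ℍ[ℝ]) - t • J)) (-fY x (-y)) y := by
    have hneg : HasDerivAt (fun t : ℝ => -t) (-1 : ℝ) y := (hasDerivAt_id y).neg
    have := HasDerivAt.scomp y (by simpa using hfY x (-y) hxy') hneg
    simpa only [Function.comp_def, neg_smul, ← sub_eq_add_neg, neg_one_smul, one_smul,
      smul_eq_mul, neg_mul, one_mul] using this
  have hA := (h1.add h2).const_smul (1 / 2 : ℝ)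
  have hB := (((h2.sub h1).const_mul J).const_smul (1 / 2 : ℝ)).const_mul I
  simpa only [Ffun, Fyfun, Pi.add_def, Pi.smul_def, Pi.sub_def] using hA.add hB

lemma F_CR {I J : ℍ[ℝ]} (hI2 : I * I = -1) (hJ2 : J * J = -1) {fX fY : ℝ → ℝ → ℍ[ℝ]} {x y : ℝ}
    (hcr1 : fX x y + J * fY x y = 0) (hcr2 : fX x (-y) + J * fY x (-y) = 0) :
    Fxfun fX J I x y + I * Fyfun fY J I x y = 0 := by
  have := cr_algebra hI2 hJ2 hcr1 hcr2
  rw [Fxfun, Fyfun]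
  simpa only [sub_eq_add_neg] using this

lemma F_contOn_aux {E : Set (ℝ × ℝ)} (hEsym : ∀ p ∈ E, ((p.1, -p.2) : ℝ × ℝ) ∈ E)
    {g : ℝ → ℝ → ℍ[ℝ]} (hc : ContinuousOn (fun p : ℝ × ℝ => g p.1 p.2) E) :
    ContinuousOn (fun p : ℝ × ℝ => g p.1 (-p.2)) E := by
  have hcont : Continuous (fun p : ℝ × ℝ => ((p.1, -p.2) : ℝ × ℝ)) := by continuity
  exact hc.comp hcont.continuousOn (fun p hp => hEsym p hp)

lemma Fx_contOn {E : Set (ℝ × ℝ)} (hEsym : ∀ p ∈ E, ((p.1, -p.2) : ℝ × ℝ) ∈ E)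
    {fX : ℝ → ℝ → ℍ[ℝ]} (hc : ContinuousOn (fun p : ℝ × ℝ => fX p.1 p.2) E) (J I : ℍ[ℝ]) :
    ContinuousOn (fun p : ℝ × ℝ => Fxfun fX J I p.1 p.2) E := by
  have hσ := F_contOn_aux hEsym hc
  exact ((hc.add hσ).const_smul (1 / 2 : ℝ)).add (continuousOn_const.mul
    (((continuousOn_const.mul (hσ.sub hc))).const_smul (1 / 2 : ℝ)))

lemma Fy_contOn {E : Set (ℝ × ℝ)} (hEsym : ∀ p ∈ E, ((p.1, -p.2) : ℝ × ℝ) ∈ E)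
    {fY : ℝ → ℝ → ℍ[ℝ]} (hc : ContinuousOn (fun p : ℝ × ℝ => fY p.1 p.2) E) (J I : ℍ[ℝ]) :
    ContinuousOn (fun p : ℝ × ℝ => Fyfun fY J I p.1 p.2) E := by
  have hσ := F_contOn_aux hEsym hc
  exact ((hc.add hσ.neg).const_smul (1 / 2 : ℝ)).add (continuousOn_const.mul
    (((continuousOn_const.mul (hσ.neg.sub hc))).const_smul (1 / 2 : ℝ)))

def epsLm (J : ℍ[ℝ]) : ℂ →ₗ[ℝ] ℍ[ℝ] where
  toFun z := ((z.re : ℝ) : ℍ[ℝ]) + z.im • J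
  map_add' a b := by
    simp only [Complex.add_re, Complex.add_im, Quaternion.coe_add, add_smul]
    abel
  map_smul' r z := by
    simp only [Complex.smul_re, Complex.smul_im, RingHom.id_apply, smul_add, smul_smul,
      smul_eq_mul, Quaternion.coe_smul]
    rw [show r * z.re = r • z.re from rfl, Quaternion.coe_smul]

lemma epsLm_inj {J : ℍ[ℝ]} (hJ : J ∈ SpH) : LinearMap.ker (epsLm J) = ⊥ := by
  rw [LinearMap.ker_eq_bot']
  intro z hz
  have hre : ((z.re : ℍ[ℝ]) + z.im • J).re = z.re := param_re hJ z.re z.im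
  have hz' : ((z.re : ℍ[ℝ]) + z.im • J) = 0 := hz
  have h1 : z.re = 0 := by rw [← hre, hz']; simp
  rw [h1] at hz'
  simp only [Complex.ofReal_zero, Quaternion.coe_zero, zero_add] at hz'
  have h2 : z.im = 0 := by
    have := congrArg norm hz'
    simpa [norm_smul, hJ.2] using this
  exact Complex.ext h1 h2

lemma E'_preconnected {J : ℍ[ℝ]} (hJ : J ∈ SpH) {D : Set ℍ[ℝ]} (hDs : D ⊆ sliceL J)
    (hDconn : IsConnected D) :
    IsPreconnected {z : ℂ | ((z.re : ℝ) : ℍ[ℝ]) + z.im • J ∈ D} := by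
  have hemb : Topology.IsInducing (epsLm J) :=
    (LinearMap.isClosedEmbedding_of_injective (epsLm_inj hJ)).toIsInducing
  have himg : (epsLm J) '' {z : ℂ | ((z.re : ℝ) : ℍ[ℝ]) + z.im • J ∈ D} = D := by
    ext q
    constructor
    · rintro ⟨z, hz, rfl⟩; exact hz
    · intro hq
      obtain ⟨x, y, rfl⟩ := hDs hq
      refine ⟨Complex.mk x y, ?_, ?_⟩
      · simpa using hq
      · simp [epsLm]
  rw [← hemb.isPreconnected_image, himg]
  exact hDconn.isPreconnected

lemma holo_vanishing {E : Set (ℝ × ℝ)} (hEopen : IsOpen E)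
    (hEconn : IsPreconnected {z : ℂ | (z.re, z.im) ∈ E})
    (φ φx φy : ℝ → ℝ → ℍ[ℝ]) {I : ℍ[ℝ]} (hI2 : I * I = -1)
    (hdx : ∀ p : ℝ × ℝ, p ∈ E → HasDerivAt (fun t => φ t p.2) (φx p.1 p.2) p.1)
    (hdy : ∀ p : ℝ × ℝ, p ∈ E → HasDerivAt (fun t => φ p.1 t) (φy p.1 p.2) p.2)
    (hcx : ContinuousOn (fun p : ℝ × ℝ => φx p.1 p.2) E)
    (hCR : ∀ p : ℝ × ℝ, p ∈ E → φx p.1 p.2 + I * φy p.1 p.2 = 0)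
    {x₀ : ℝ} (hx₀ : ((x₀, (0 : ℝ)) : ℝ × ℝ) ∈ E)
    (hself : ∀ t : ℝ, ((t, (0 : ℝ)) : ℝ × ℝ) ∈ E → φ t 0 = 0) :
    ∀ p ∈ E, φ p.1 p.2 = 0 := by
  -- relations from Cauchy-Riemann
  have hIφx : ∀ p : ℝ × ℝ, p ∈ E → I * φx p.1 p.2 = φy p.1 p.2 := by
    intro p hp
    have h2 := congrArg (fun w => I * w) (hCR p hp)
    simp only [mul_add, ← mul_assoc, hI2, neg_one_mul, mul_zero] at h2
    exact add_neg_eq_zero.1 h2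
  have hIφy : ∀ p : ℝ × ℝ, p ∈ E → I * φy p.1 p.2 = -φx p.1 p.2 := by
    intro p hp
    rw [← hIφx p hp, ← mul_assoc, hI2, neg_one_mul]
  intro p₀ hp₀
  by_contra hne
  obtain ⟨ℓ, -, hℓ⟩ := exists_dual_vector ℝ (φ p₀.1 p₀.2) (norm_ne_zero_iff.2 hne)
  suffices hkey : ℓ (φ p₀.1 p₀.2) = 0 by
    rw [hkey] at hℓ
    exact hne (norm_eq_zero.1 hℓ.symm)
  -- the holomorphic complex function
  set Ψ : ℝ → ℝ → ℂ := fun x y => (ℓ (φ x y) : ℂ) - (ℓ (I * φ x y) : ℂ) * Complex.I with hΨdef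
  set Ψx : ℝ → ℝ → ℂ :=
    fun x y => (ℓ (φx x y) : ℂ) - (ℓ (I * φx x y) : ℂ) * Complex.I with hΨxdef
  set Ψy : ℝ → ℝ → ℂ :=
    fun x y => (ℓ (φy x y) : ℂ) - (ℓ (I * φy x y) : ℂ) * Complex.I with hΨydef
  have hdxΨ : ∀ p : ℝ × ℝ, p ∈ E → HasDerivAt (fun t => Ψ t p.2) (Ψx p.1 p.2) p.1 := by
    intro p hp
    have h1 : HasDerivAt (fun t => (ℓ (φ t p.2) : ℂ)) ((ℓ (φx p.1 p.2) : ℂ)) p.1 :=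
      Complex.ofRealCLM.hasFDerivAt.comp_hasDerivAt p.1
        (ℓ.hasFDerivAt.comp_hasDerivAt p.1 (hdx p hp))
    have h2 : HasDerivAt (fun t => (ℓ (I * φ t p.2) : ℂ)) ((ℓ (I * φx p.1 p.2) : ℂ)) p.1 :=
      Complex.ofRealCLM.hasFDerivAt.comp_hasDerivAt p.1
        (ℓ.hasFDerivAt.comp_hasDerivAt p.1 ((hdx p hp).const_mul I))
    exact h1.sub (h2.mul_const Complex.I)
  have hdyΨ : ∀ p : ℝ × ℝ, p ∈ E → HasDerivAt (fun t => Ψ p.1 t) (Ψy p.1 p.2) p.2 := by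
    intro p hp
    have h1 : HasDerivAt (fun t => (ℓ (φ p.1 t) : ℂ)) ((ℓ (φy p.1 p.2) : ℂ)) p.2 :=
      Complex.ofRealCLM.hasFDerivAt.comp_hasDerivAt p.2
        (ℓ.hasFDerivAt.comp_hasDerivAt p.2 (hdy p hp))
    have h2 : HasDerivAt (fun t => (ℓ (I * φ p.1 t) : ℂ)) ((ℓ (I * φy p.1 p.2) : ℂ)) p.2 :=
      Complex.ofRealCLM.hasFDerivAt.comp_hasDerivAt p.2
        (ℓ.hasFDerivAt.comp_hasDerivAt p.2 ((hdy p hp).const_mul I))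
    exact h1.sub (h2.mul_const Complex.I)
  have hcxΨ : ContinuousOn (fun p : ℝ × ℝ => Ψx p.1 p.2) E := by
    have c1 : ContinuousOn (fun p : ℝ × ℝ => (ℓ (φx p.1 p.2) : ℂ)) E :=
      Complex.continuous_ofReal.comp_continuousOn (ℓ.continuous.comp_continuousOn hcx)
    have c2 : ContinuousOn (fun p : ℝ × ℝ => (ℓ (I * φx p.1 p.2) : ℂ)) E :=
      Complex.continuous_ofReal.comp_continuousOn
        (ℓ.continuous.comp_continuousOn (continuousOn_const.mul hcx))
    exact c1.sub (c2.mul continuousOn_const)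
  have hΨCR : ∀ p : ℝ × ℝ, p ∈ E → Ψy p.1 p.2 = Complex.I * Ψx p.1 p.2 := by
    intro p hp
    rw [hΨxdef, hΨydef]
    simp only
    rw [← hIφx p hp, ← mul_assoc, hI2, neg_one_mul, map_neg]
    push_cast
    linear_combination (ℓ (I * φx p.1 p.2) : ℂ) * Complex.I_mul_I
  -- pass to ℂ
  set E' : Set ℂ := {z : ℂ | (z.re, z.im) ∈ E} with hE'def
  have hE'open : IsOpen E' :=
    hEopen.preimage (Complex.continuous_re.prodMk Complex.continuous_im)
  set Ψc : ℂ → ℂ := fun z => Ψ z.re z.im with hΨcdef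
  have hd : ∀ z ∈ E', HasDerivAt Ψc (Ψx z.re z.im) z := by
    intro z hz
    have hzE : ((z.re, z.im) : ℝ × ℝ) ∈ E := hz
    have hF := hasFDerivAt_of_partials Ψ Ψx Ψy E hEopen hdxΨ hdyΨ hcxΨ (z.re, z.im) hzE
    have hcomp : HasFDerivAt Ψc
        (((ContinuousLinearMap.fst ℝ ℝ ℝ).smulRight (Ψx z.re z.im) +
          (ContinuousLinearMap.snd ℝ ℝ ℝ).smulRight (Ψy z.re z.im)).comp
          (Complex.equivRealProdCLM : ℂ →L[ℝ] ℝ × ℝ)) z := by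
      have := hF.comp z Complex.equivRealProdCLM.hasFDerivAt
      exact this
    rw [hasDerivAt_iff_hasFDerivAt]
    refine hasFDerivAt_of_restrictScalars ℝ hcomp ?_
    apply ContinuousLinearMap.ext
    intro w
    have happ : (Complex.equivRealProdCLM : ℂ →L[ℝ] ℝ × ℝ) w = (w.re, w.im) := rfl
    have hL : (ContinuousLinearMap.restrictScalars ℝ
        (ContinuousLinearMap.toSpanSingleton ℂ (Ψx z.re z.im))) w
        = w * Ψx z.re z.im := by
      simp
    have hR : ((((ContinuousLinearMap.fst ℝ ℝ ℝ).smulRight (Ψx z.re z.im) +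
          (ContinuousLinearMap.snd ℝ ℝ ℝ).smulRight (Ψy z.re z.im)).comp
          (Complex.equivRealProdCLM : ℂ →L[ℝ] ℝ × ℝ))) w
        = w.re • Ψx z.re z.im + w.im • Ψy z.re z.im := by
      simp only [ContinuousLinearMap.coe_comp', Function.comp_apply, happ,
        ContinuousLinearMap.add_apply, ContinuousLinearMap.smulRight_apply,
        ContinuousLinearMap.coe_fst', ContinuousLinearMap.coe_snd']
    rw [hL, hR, hΨCR (z.re, z.im) hzE, Complex.real_smul, Complex.real_smul]
    linear_combination (-(Ψx z.re z.im)) * (Complex.re_add_im w)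
  have hdiff : DifferentiableOn ℂ Ψc E' := fun z hz =>
    (hd z hz).differentiableAt.differentiableWithinAt
  have hanalytic := hdiff.analyticOnNhd hE'open
  have hz₀ : ((x₀ : ℝ) : ℂ) ∈ E' := by
    show (((x₀ : ℂ).re, (x₀ : ℂ).im) : ℝ × ℝ) ∈ E
    simpa using hx₀
  have hfreq : ∃ᶠ z in nhdsWithin ((x₀ : ℝ) : ℂ) {z | z ≠ ((x₀ : ℝ) : ℂ)}, Ψc z = 0 := by
    rw [Filter.frequently_iff]
    intro U hU
    obtain ⟨ε, hε, hball⟩ := Metric.mem_nhdsWithin_iff.1 hU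
    obtain ⟨δ, hδ, hδball⟩ := Metric.isOpen_iff.1 hE'open _ hz₀
    set r : ℝ := min ε δ / 2 with hrdef
    have hr : 0 < r := by positivity
    have hrε : r < ε := by
      calc r ≤ ε / 2 := by rw [hrdef]; gcongr; exact min_le_left _ _
      _ < ε := by linarith
    have hrδ : r < δ := by
      calc r ≤ δ / 2 := by rw [hrdef]; gcongr; exact min_le_right _ _
      _ < δ := by linarith
    have hdist : dist (((x₀ : ℝ) : ℂ) + (r : ℂ)) ((x₀ : ℝ) : ℂ) = r := by
      simp [dist_eq_norm, abs_of_pos hr]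
    have hne' : ((x₀ : ℝ) : ℂ) + (r : ℂ) ≠ ((x₀ : ℝ) : ℂ) := by
      intro hcontra
      have := congrArg Complex.re hcontra
      simp at this
      linarith
    refine ⟨((x₀ : ℝ) : ℂ) + (r : ℂ), hball ⟨?_, hne'⟩, ?_⟩
    · rw [Metric.mem_ball, hdist]; exact hrε
    · have hmem : ((x₀ : ℝ) : ℂ) + (r : ℂ) ∈ E' := by
        apply hδball
        rw [Metric.mem_ball, hdist]; exact hrδ
      have hmem2 : ((x₀ + r, (0 : ℝ)) : ℝ × ℝ) ∈ E := by
        have : ((((x₀ : ℝ) : ℂ) + (r : ℂ)).re, (((x₀ : ℝ) : ℂ) + (r : ℂ)).im) ∈ E := hmem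
        simpa using this
      have hφ0 := hself (x₀ + r) hmem2
      show Ψ (((x₀ : ℝ) : ℂ) + (r : ℂ)).re (((x₀ : ℝ) : ℂ) + (r : ℂ)).im = 0
      have hre : (((x₀ : ℝ) : ℂ) + (r : ℂ)).re = x₀ + r := by simp
      have him : (((x₀ : ℝ) : ℂ) + (r : ℂ)).im = 0 := by simp
      rw [hre, him, hΨdef]
      simp only [hφ0, map_zero, mul_zero, Complex.ofReal_zero, zero_mul, sub_zero]
  have hzero := hanalytic.eqOn_zero_of_preconnected_of_frequently_eq_zero hEconn hz₀ hfreq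
  have hp₀' : ((p₀.1 : ℝ) : ℂ) + (p₀.2 : ℝ) * Complex.I ∈ E' := by
    show (((((p₀.1 : ℝ) : ℂ) + (p₀.2 : ℝ) * Complex.I).re,
      ((((p₀.1 : ℝ) : ℂ)) + (p₀.2 : ℝ) * Complex.I).im) : ℝ × ℝ) ∈ E
    simpa using hp₀
  have hval := hzero hp₀'
  have hval2 : Ψ p₀.1 p₀.2 = 0 := by
    have : Ψc (((p₀.1 : ℝ) : ℂ) + (p₀.2 : ℝ) * Complex.I) = 0 := hval
    rw [hΨcdef] at this
    simpa using this
  have := congrArg Complex.re hval2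
  rw [hΨdef] at this
  simpa using this

/-- Extension Lemma: a holomorphic function on a symmetric slice domain extends uniquely to a
slice regular function on the symmetric completion, given by the representation formula. -/
theorem extension_lemma
    (J : ℍ[ℝ]) (hJ : J ∈ SpH)
    (D : Set ℍ[ℝ]) (hD : IsSliceDomain J D)
    (hsymm : ∀ x y : ℝ, (x : ℍ[ℝ]) + y • J ∈ D → (x : ℍ[ℝ]) - y • J ∈ D)
    (hre : ∃ x : ℝ, (x : ℍ[ℝ]) ∈ D)
    (f : ℍ[ℝ] → ℍ[ℝ]) (hf : SliceHolomorphicOn J f D) (hfm : Set.MapsTo f D (sliceL J)) :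
    ∃ ft : ℍ[ℝ] → ℍ[ℝ],
      SliceRegularOn ft (symmComp D) ∧
      (∀ x y : ℝ, ∀ I ∈ SpH, (x : ℍ[ℝ]) + y • I ∈ symmComp D →
        ft ((x : ℍ[ℝ]) + y • I) =
          (1 / 2 : ℝ) • (f ((x : ℍ[ℝ]) + y • J) + f ((x : ℍ[ℝ]) - y • J)) +
            I * ((1 / 2 : ℝ) • (J * (f ((x : ℍ[ℝ]) - y • J) - f ((x : ℍ[ℝ]) + y • J))))) ∧
      Set.EqOn ft f D ∧
      ∀ g : ℍ[ℝ] → ℍ[ℝ], SliceRegularOn g (symmComp D) → Set.EqOn g f D →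
        Set.EqOn g ft (symmComp D) := by
  obtain ⟨hDs, hDconn, hDopen⟩ := hD
  obtain ⟨fX, fY, hfX, hfY, hfXc, hfYc, hfCR⟩ := hf
  have hJ2 := SpH.mul_self' hJ
  set E : Set (ℝ × ℝ) := {p : ℝ × ℝ | (p.1 : ℍ[ℝ]) + p.2 • J ∈ D} with hEdef
  have hEopen : IsOpen E := hDopen
  have hEsym : ∀ p ∈ E, ((p.1, -p.2) : ℝ × ℝ) ∈ E := by
    intro p hp
    show (p.1 : ℍ[ℝ]) + (-p.2) • J ∈ D
    rw [neg_smul, ← sub_eq_add_neg]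
    exact hsymm p.1 p.2 hp
  have hform : ∀ (x y : ℝ) (I : ℍ[ℝ]), I ∈ SpH →
      ftfun f J ((x : ℍ[ℝ]) + y • I) = Ffun f J I x y :=
    fun x y I hI => ft_eval f hJ hI x y
  have hsetE : ∀ {I : ℍ[ℝ]}, I ∈ SpH →
      {p : ℝ × ℝ | (p.1 : ℍ[ℝ]) + p.2 • I ∈ symmComp D} = E :=
    fun hI => Set.ext (fun p => mem_symmComp_iff hJ hDs hsymm hI)
  refine ⟨ftfun f J, ?_, ?_, ?_, ?_⟩
  · -- slice regularity
    intro I hI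
    have hmemE : ∀ {x y : ℝ}, (x : ℍ[ℝ]) + y • I ∈ symmComp D → ((x, y) : ℝ × ℝ) ∈ E :=
      fun h => (mem_symmComp_iff hJ hDs hsymm hI).1 h
    refine ⟨Fxfun fX J I, Fyfun fY J I, ?_, ?_, ?_, ?_, ?_⟩
    · intro x y hmem
      have hp : ((x, y) : ℝ × ℝ) ∈ E := hmemE hmem
      have hp' : ((x, -y) : ℝ × ℝ) ∈ E := hEsym _ hp
      exact (Ffun_hasDerivAt_x f fX hfX I hp hp').congr_of_eventuallyEq
        (Filter.Eventually.of_forall fun t => hform t y I hI)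
    · intro x y hmem
      have hp : ((x, y) : ℝ × ℝ) ∈ E := hmemE hmem
      have hp' : ((x, -y) : ℝ × ℝ) ∈ E := hEsym _ hp
      exact (Ffun_hasDerivAt_y f fY hfY I hp hp').congr_of_eventuallyEq
        (Filter.Eventually.of_forall fun t => hform x t I hI)
    · rw [hsetE hI]; exact Fx_contOn hEsym hfXc J I
    · rw [hsetE hI]; exact Fy_contOn hEsym hfYc J I
    · intro x y hmem
      have hp : ((x, y) : ℝ × ℝ) ∈ E := hmemE hmem
      have hp' : ((x, -y) : ℝ × ℝ) ∈ E := hEsym _ hp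
      exact F_CR (SpH.mul_self' hI) hJ2 (hfCR x y hp) (hfCR x (-y) hp')
  · -- representation formula
    intro x y I hI _
    exact hform x y I hI
  · -- agrees with f on D
    intro q hq
    obtain ⟨x, y, rfl⟩ := hDs hq
    rw [show ftfun f J ((x : ℍ[ℝ]) + y • J) = Ffun f J J x y from hform x y J hJ, Ffun,
      mul_smul_comm, ← mul_assoc, hJ2, neg_one_mul, smul_neg]
    module
  · -- uniqueness
    intro g hg hgf q hq
    obtain ⟨x, y, I, hI, rfl, J', hJ', hJ'mem⟩ := hq
    have hmem : (x : ℍ[ℝ]) + y • I ∈ symmComp D := ⟨x, y, I, hI, rfl, J', hJ', hJ'mem⟩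
    have hp : ((x, y) : ℝ × ℝ) ∈ E := (mem_symmComp_iff hJ hDs hsymm hI).1 hmem
    obtain ⟨gX, gY, hgX, hgY, hgXc, hgYc, hgCR⟩ := hg I hI
    have hI2 := SpH.mul_self' hI
    have hmemΩ : ∀ p : ℝ × ℝ, p ∈ E → ((p.1 : ℍ[ℝ]) + p.2 • I ∈ symmComp D) :=
      fun p hp => (mem_symmComp_iff hJ hDs hsymm hI).2 hp
    set φ : ℝ → ℝ → ℍ[ℝ] :=
      fun a b => g ((a : ℍ[ℝ]) + b • I) - Ffun f J I a b with hφdef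
    set φx : ℝ → ℝ → ℍ[ℝ] := fun a b => gX a b - Fxfun fX J I a b with hφxdef
    set φy : ℝ → ℝ → ℍ[ℝ] := fun a b => gY a b - Fyfun fY J I a b with hφydef
    have hdx : ∀ p : ℝ × ℝ, p ∈ E → HasDerivAt (fun t => φ t p.2) (φx p.1 p.2) p.1 :=
      fun p hp => (hgX p.1 p.2 (hmemΩ p hp)).sub
        (Ffun_hasDerivAt_x f fX hfX I hp (hEsym p hp))
    have hdy : ∀ p : ℝ × ℝ, p ∈ E → HasDerivAt (fun t => φ p.1 t) (φy p.1 p.2) p.2 :=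
      fun p hp => (hgY p.1 p.2 (hmemΩ p hp)).sub
        (Ffun_hasDerivAt_y f fY hfY I hp (hEsym p hp))
    have hcx : ContinuousOn (fun p : ℝ × ℝ => φx p.1 p.2) E := by
      have h1 : ContinuousOn (fun p : ℝ × ℝ => gX p.1 p.2) E := by
        have := hgXc; rwa [hsetE hI] at this
      exact h1.sub (Fx_contOn hEsym hfXc J I)
    have hCR : ∀ p : ℝ × ℝ, p ∈ E → φx p.1 p.2 + I * φy p.1 p.2 = 0 := by
      intro p hp
      have hgc := hgCR p.1 p.2 (hmemΩ p hp)
      have hfc := F_CR hI2 hJ2 (hfCR p.1 p.2 hp) (hfCR p.1 (-p.2) (hEsym p hp))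
      have hsplit : φx p.1 p.2 + I * φy p.1 p.2 =
          (gX p.1 p.2 + I * gY p.1 p.2) -
            (Fxfun fX J I p.1 p.2 + I * Fyfun fY J I p.1 p.2) := by
        rw [hφxdef, hφydef]
        simp only
        rw [mul_sub]
        abel
      rw [hsplit, hgc, hfc, sub_zero]
    obtain ⟨x₀, hx₀D⟩ := hre
    have hx₀E : ((x₀, (0 : ℝ)) : ℝ × ℝ) ∈ E := by
      show (x₀ : ℍ[ℝ]) + (0 : ℝ) • J ∈ D
      simpa using hx₀D
    have hself : ∀ t : ℝ, ((t, (0 : ℝ)) : ℝ × ℝ) ∈ E → φ t 0 = 0 := by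
      intro t ht
      have htD : (t : ℍ[ℝ]) ∈ D := by
        have : (t : ℍ[ℝ]) + (0 : ℝ) • J ∈ D := ht
        simpa using this
      have h1 : g ((t : ℍ[ℝ]) + (0 : ℝ) • I) = f (t : ℍ[ℝ]) := by
        rw [zero_smul, add_zero]; exact hgf htD
      have h2 : Ffun f J I t 0 = f (t : ℍ[ℝ]) := by
        rw [Ffun]
        simp only [zero_smul, add_zero, sub_zero, sub_self, mul_zero, smul_zero]
        rw [← two_smul ℝ (f (t : ℍ[ℝ])), smul_smul]
        norm_num
      rw [hφdef]
      simp only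
      rw [h1, h2, sub_self]
    have hE'conn : IsPreconnected {z : ℂ | ((z.re, z.im) : ℝ × ℝ) ∈ E} :=
      E'_preconnected hJ hDs hDconn
    have hvan := holo_vanishing hEopen hE'conn φ φx φy hI2 hdx hdy hcx hCR hx₀E hself
    have hres := hvan (x, y) hp
    show g ((x : ℍ[ℝ]) + y • I) = ftfun f J ((x : ℍ[ℝ]) + y • I)
    rw [hform x y I hI]
    have : g ((x : ℍ[ℝ]) + y • I) - Ffun f J I x y = 0 := hres
    exact sub_eq_zero.1 this
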